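/- For each integer d ≥ 2, let p_d denote the unique solution p ∈ (0, 1/4] of the equation ((1 + √(1 − 4p))/2)^d = p. Then p_d is asymptotic to (ln d)/d as d → ∞; that is, lim_{d→∞} d·p_d/ln d = 1. -/

import Mathlib

set_option maxHeartbeats 1000000
open Filter

lemma aux_exp_le_one_sub {x : ℝ} (hx1 : x < 1) :
    Real.exp (-(x / (1 - x))) ≤ 1 - x := by
  have h1x : (0:ℝ) < 1 - x := by linarith
  have h1 : x / (1 - x) + 1 ≤ Real.exp (x / (1 - x)) := Real.add_one_le_exp _
  have h2 : x / (1 - x) + 1 = 1 / (1 - x) := by field_simp; ring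
  rw [h2] at h1
  rw [Real.exp_neg]
  rw [inv_le_comm₀ (Real.exp_pos _) h1x]
  calc (1 - x)⁻¹ = 1 / (1 - x) := (one_div _).symm
    _ ≤ Real.exp (x / (1 - x)) := h1

lemma aux_p_le (p : ℕ → ℝ)
    (hp : ∀ d : ℕ, 2 ≤ d → p d ∈ Set.Ioc (0 : ℝ) (1 / 4) ∧
      ((1 + Real.sqrt (1 - 4 * p d)) / 2) ^ d = p d)
    {d : ℕ} {a : ℝ} (hd : 2 ≤ d) (ha0 : 0 < a)
    (h : ((1 + Real.sqrt (1 - 4 * a)) / 2) ^ d ≤ a) : p d ≤ a := by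
  by_contra hc
  push_neg at hc
  obtain ⟨⟨hp0, hp4⟩, heq⟩ := hp d hd
  have h1 : (0:ℝ) ≤ 1 - 4 * p d := by linarith
  have h2 : Real.sqrt (1 - 4 * p d) < Real.sqrt (1 - 4 * a) :=
    Real.sqrt_lt_sqrt h1 (by linarith)
  have hB0 : (0:ℝ) ≤ (1 + Real.sqrt (1 - 4 * p d)) / 2 := by
    have := Real.sqrt_nonneg (1 - 4 * p d); linarith
  have h3 : ((1 + Real.sqrt (1 - 4 * p d)) / 2) ^ d
      < ((1 + Real.sqrt (1 - 4 * a)) / 2) ^ d :=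
    pow_lt_pow_left₀ (by linarith) hB0 (by omega)
  rw [heq] at h3
  linarith

lemma aux_p_ge (p : ℕ → ℝ)
    (hp : ∀ d : ℕ, 2 ≤ d → p d ∈ Set.Ioc (0 : ℝ) (1 / 4) ∧
      ((1 + Real.sqrt (1 - 4 * p d)) / 2) ^ d = p d)
    {d : ℕ} {b : ℝ} (hd : 2 ≤ d) (hb4 : b ≤ 1 / 4)
    (h : b ≤ ((1 + Real.sqrt (1 - 4 * b)) / 2) ^ d) : b ≤ p d := by
  by_contra hc
  push_neg at hc
  obtain ⟨⟨hp0, hp4⟩, heq⟩ := hp d hd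
  have h1 : (0:ℝ) ≤ 1 - 4 * b := by linarith
  have h2 : Real.sqrt (1 - 4 * b) < Real.sqrt (1 - 4 * p d) :=
    Real.sqrt_lt_sqrt h1 (by linarith)
  have hB0 : (0:ℝ) ≤ (1 + Real.sqrt (1 - 4 * b)) / 2 := by
    have := Real.sqrt_nonneg (1 - 4 * b); linarith
  have h3 : ((1 + Real.sqrt (1 - 4 * b)) / 2) ^ d
      < ((1 + Real.sqrt (1 - 4 * p d)) / 2) ^ d :=
    pow_lt_pow_left₀ (by linarith) hB0 (by omega)
  rw [heq] at h3
  linarith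

theorem star_critical_asymptotics (p : ℕ → ℝ)
    (hp : ∀ d : ℕ, 2 ≤ d → p d ∈ Set.Ioc (0 : ℝ) (1 / 4) ∧
      ((1 + Real.sqrt (1 - 4 * p d)) / 2) ^ d = p d) :
    Tendsto (fun d : ℕ => (d : ℝ) * p d / Real.log d) atTop (nhds 1) := by
  have hlogcast : Tendsto (fun d : ℕ => Real.log d) atTop atTop :=
    Real.tendsto_log_atTop.comp tendsto_natCast_atTop_atTop
  have hLd : Tendsto (fun d : ℕ => Real.log d / d) atTop (nhds 0) :=
    Real.isLittleO_log_id_atTop.tendsto_div_nhds_zero.comp tendsto_natCast_atTop_atTop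
  have hLL : Tendsto (fun d : ℕ => Real.log (Real.log d) / Real.log d) atTop (nhds 0) :=
    Real.isLittleO_log_id_atTop.tendsto_div_nhds_zero.comp hlogcast
  have key : ∀ e : ℝ, 0 < e → e ≤ 1/2 →
      ∀ᶠ d : ℕ in atTop, (1 - e) * Real.log d / d ≤ p d ∧ p d ≤ (1 + e) * Real.log d / d := by
    intro e he0 he1
    filter_upwards [eventually_ge_atTop 2, hlogcast.eventually_ge_atTop 1,
      hLd.eventually (eventually_le_nhds (show (0:ℝ) < e/32 by linarith)),
      hLL.eventually (eventually_le_nhds (show (0:ℝ) < e/2 by linarith))]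
      with d hd2 hL1 hsm hll
    have hdR : (2:ℝ) ≤ (d:ℝ) := by exact_mod_cast hd2
    have hd0 : (0:ℝ) < d := by linarith
    set L : ℝ := Real.log d with hLdef
    have hL0 : (0:ℝ) < L := by linarith
    have hLsm : L ≤ e/32 * d := by
      rw [div_le_iff₀ hd0] at hsm; linarith
    constructor
    · -- lower bound
      set b : ℝ := (1 - e) * L / d with hbdef
      have hb0 : 0 < b := div_pos (mul_pos (by linarith) hL0) hd0
      have hbd : b * d = (1 - e) * L := by
        rw [hbdef]; field_simp
      have hb32 : b ≤ e/32 := by nlinarith [hbd, hLsm, hd0, hL0]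
      have hb64 : b ≤ 1/64 := by linarith
      set x : ℝ := b + 2*b^2 with hxdef
      have hx0 : 0 ≤ x := by nlinarith
      have hxb : x ≤ (33/32)*b := by nlinarith
      have hx1 : x < 1 := by nlinarith
      have h1x : (0:ℝ) < 1 - x := by linarith
      -- base lower bound
      have hsqge : 1 - 2*b - 4*b^2 ≤ Real.sqrt (1 - 4*b) := by
        have h1 : ((1 - 2*b - 4*b^2):ℝ) = Real.sqrt ((1 - 2*b - 4*b^2)^2) :=
          (Real.sqrt_sq (by nlinarith)).symm
        rw [h1]
        exact Real.sqrt_le_sqrt (by nlinarith)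
      have hbase : 1 - x ≤ (1 + Real.sqrt (1 - 4*b)) / 2 := by
        rw [hxdef]; linarith
      -- log estimate
      have hkey : b ≤ Real.exp (-((d:ℝ) * (x / (1 - x)))) := by
        apply (Real.log_le_iff_le_exp hb0).mp
        have hlogb : Real.log b = Real.log ((1 - e) * L) - L := by
          rw [hbdef, Real.log_div (ne_of_gt (mul_pos (by linarith : (0:ℝ) < 1 - e) hL0)) (ne_of_gt hd0), ← hLdef]
        have h5 : Real.log ((1 - e) * L) ≤ e/2 * L := by
          have h5a : Real.log ((1 - e) * L) ≤ Real.log L :=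
            Real.log_le_log (mul_pos (by linarith) hL0) (by nlinarith)
          have h5b : Real.log L ≤ e/2 * L := by
            rw [div_le_iff₀ hL0] at hll; linarith
          linarith
        have h6 : (d:ℝ) * (x / (1 - x)) ≤ (1 - e/2) * L := by
          have h7 : x / (1 - x) ≤ b * (1 + e/2) := by
            have hf2 : e * b ≤ b := by nlinarith [hb0, he1]
            have hf3 : b^2 ≤ e/2048 := by nlinarith [hb64, hb32, hb0]
            have hf4 : e * b^2 ≤ b^2 := by nlinarith [sq_nonneg b, he1]
            have hinner : 0 ≤ e/2 - 3*b - e/2*b - 2*b^2 - e*b^2 := by nlinarith [hb32]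
            rw [div_le_iff₀ h1x]
            nlinarith [mul_nonneg hb0.le hinner]
          calc (d:ℝ) * (x / (1 - x)) ≤ (d:ℝ) * (b * (1 + e/2)) := by
                apply mul_le_mul_of_nonneg_left h7 (le_of_lt hd0)
            _ = (b * d) * (1 + e/2) := by ring
            _ = ((1 - e) * L) * (1 + e/2) := by rw [hbd]
            _ ≤ (1 - e/2) * L := by nlinarith [mul_nonneg (mul_nonneg he0.le he0.le) hL0.le]
        linarith
      have hb4 : b ≤ 1/4 := by linarith
      apply aux_p_ge p hp hd2 hb4
      calc b ≤ Real.exp (-((d:ℝ) * (x / (1 - x)))) := hkey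
        _ = Real.exp (-(x / (1 - x))) ^ d := by
            rw [← Real.exp_nat_mul]; ring_nf
        _ ≤ (1 - x) ^ d := pow_le_pow_left₀ (le_of_lt (Real.exp_pos _))
            (aux_exp_le_one_sub hx1) d
        _ ≤ ((1 + Real.sqrt (1 - 4*b)) / 2) ^ d := pow_le_pow_left₀ (by linarith) hbase d
    · -- upper bound
      set a : ℝ := (1 + e) * L / d with hadef
      have ha0 : 0 < a := div_pos (mul_pos (by linarith) hL0) hd0
      have had : a * d = (1 + e) * L := by rw [hadef]; field_simp
      have ha4 : a ≤ 1/4 := by nlinarith [had, hLsm, hd0, hL0]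
      have hsqle : Real.sqrt (1 - 4*a) ≤ 1 - 2*a := by
        have h1 : Real.sqrt (1 - 4*a) ≤ Real.sqrt ((1 - 2*a)^2) :=
          Real.sqrt_le_sqrt (by nlinarith)
        rwa [Real.sqrt_sq (by linarith)] at h1
      have hbase : (1 + Real.sqrt (1 - 4*a)) / 2 ≤ 1 - a := by linarith
      have hB0 : (0:ℝ) ≤ (1 + Real.sqrt (1 - 4*a)) / 2 := by
        have := Real.sqrt_nonneg (1 - 4*a); linarith
      have h1a : 1 - a ≤ Real.exp (-a) := by
        have := Real.add_one_le_exp (-a); linarith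
      have hlast : Real.exp (-((1 + e) * L)) ≤ a := by
        have hsplit : Real.exp (-((1 + e) * L)) = Real.exp (-L) * Real.exp (-(e * L)) := by
          rw [← Real.exp_add]; ring_nf
        have hexpL : Real.exp (-L) = 1 / (d:ℝ) := by
          rw [Real.exp_neg, hLdef, Real.exp_log hd0, one_div]
        have hle1 : Real.exp (-(e * L)) ≤ 1 :=
          Real.exp_le_one_iff.mpr (by nlinarith)
        have h1d : (1:ℝ) / d ≤ a := by
          rw [div_le_iff₀ hd0]; nlinarith [had]
        calc Real.exp (-((1 + e) * L)) = Real.exp (-L) * Real.exp (-(e * L)) := hsplit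
          _ ≤ Real.exp (-L) * 1 := by
              apply mul_le_mul_of_nonneg_left hle1 (le_of_lt (Real.exp_pos _))
          _ = 1 / (d:ℝ) := by rw [mul_one, hexpL]
          _ ≤ a := h1d
      apply aux_p_le p hp hd2 ha0
      calc ((1 + Real.sqrt (1 - 4*a)) / 2) ^ d ≤ (1 - a) ^ d :=
            pow_le_pow_left₀ hB0 hbase d
        _ ≤ Real.exp (-a) ^ d := pow_le_pow_left₀ (by linarith) h1a d
        _ = Real.exp ((d:ℝ) * (-a)) := (Real.exp_nat_mul _ d).symm
        _ = Real.exp (-((1 + e) * L)) := by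
            rw [show (d:ℝ) * (-a) = -(a * (d:ℝ)) from by ring, had]
        _ ≤ a := hlast
  -- assemble
  rw [Metric.tendsto_atTop]
  intro ε hε
  set e : ℝ := min (ε/2) (1/2) with hedef
  have he0 : 0 < e := lt_min (by linarith) (by norm_num)
  have he1 : e ≤ 1/2 := min_le_right _ _
  have hee : e < ε := lt_of_le_of_lt (min_le_left _ _) (by linarith)
  have hEv : ∀ᶠ d : ℕ in atTop, dist ((d:ℝ) * p d / Real.log d) 1 < ε := by
    filter_upwards [key e he0 he1, eventually_ge_atTop 2, hlogcast.eventually_ge_atTop 1]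
      with d hsand hd2 hL1
    obtain ⟨hlo, hhi⟩ := hsand
    have hdR : (2:ℝ) ≤ (d:ℝ) := by exact_mod_cast hd2
    have hd0 : (0:ℝ) < d := by linarith
    have hL0 : (0:ℝ) < Real.log d := by linarith
    have h1 : 1 - e ≤ (d:ℝ) * p d / Real.log d := by
      rw [le_div_iff₀ hL0]
      rw [div_le_iff₀ hd0] at hlo
      nlinarith [hlo]
    have h2 : (d:ℝ) * p d / Real.log d ≤ 1 + e := by
      rw [div_le_iff₀ hL0]
      rw [le_div_iff₀ hd0] at hhi
      nlinarith [hhi]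
    rw [Real.dist_eq, abs_lt]
    constructor <;> nlinarith [hee, he0]
  obtain ⟨N, hN⟩ := eventually_atTop.mp hEv
  exact ⟨N, hN⟩
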